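/- Let f, h : ℝ → ℝ be continuously differentiable 2π-periodic functions with f(x) < h(x) for all x, let Ω = {(x,y) ∈ ℝ² : f(x) < y < h(x)}, and let u be a twice continuously differentiable function on an open set containing the closure of Ω which is 2π-periodic in its first variable (u(x+2π,y) = u(x,y)) and harmonic on Ω (∂²u/∂x² + ∂²u/∂y² = 0 on Ω). Then ∫ from 0 to 2π of ( ∂u/∂y(x, h(x)) − h'(x)·∂u/∂x(x, h(x)) ) dx = ∫ from 0 to 2π of ( ∂u/∂y(x, f(x)) − f'(x)·∂u/∂x(x, f(x)) ) dx. -/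

import Mathlib

open MeasureTheory intervalIntegral Set

lemma slice1 {F : ℝ × ℝ → ℝ} {p : ℝ × ℝ} (hF : DifferentiableAt ℝ F p) :
    HasDerivAt (fun x => F (x, p.2)) (fderiv ℝ F p (1, 0)) p.1 := by
  have h := hF.hasFDerivAt.comp_hasDerivAt p.1
    (HasDerivAt.prodMk (hasDerivAt_id p.1) (hasDerivAt_const p.1 p.2))
  exact h

lemma slice2 {F : ℝ × ℝ → ℝ} {p : ℝ × ℝ} (hF : DifferentiableAt ℝ F p) :
    HasDerivAt (fun y => F (p.1, y)) (fderiv ℝ F p (0, 1)) p.2 := by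
  have h := hF.hasFDerivAt.comp_hasDerivAt p.2
    (HasDerivAt.prodMk (hasDerivAt_const p.2 p.1) (hasDerivAt_id p.2))
  exact h

lemma aux_B {V : ℝ × ℝ → ℝ} {U : Set (ℝ × ℝ)} (hU : IsOpen U) (hVc : ContinuousOn V U)
    {b : ℝ → ℝ} {b' x₀ : ℝ} (hb : HasDerivAt b b' x₀) (hmem : (x₀, b x₀) ∈ U) :
    HasDerivAt (fun x => ∫ y in (b x₀)..(b x), V (x, y)) (b' * V (x₀, b x₀)) x₀ := by
  obtain ⟨ρ, hρ, hball⟩ := Metric.nhds_basis_closedBall.mem_iff.mp (hU.mem_nhds hmem)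
  set b₀ := b x₀ with hb₀
  have hrect : ∀ x y : ℝ, |x - x₀| ≤ ρ → |y - b₀| ≤ ρ → (x, y) ∈ U := by
    intro x y h1 h2
    apply hball
    simp only [Metric.mem_closedBall, Prod.dist_eq, Real.dist_eq]
    exact max_le h1 h2
  -- slice continuity and integrability
  have hslice : ∀ x : ℝ, |x - x₀| ≤ ρ →
      ContinuousOn (fun y => V (x, y)) (Metric.closedBall b₀ ρ) := by
    intro x hx
    apply hVc.comp ((continuous_const.prodMk continuous_id).continuousOn)
    intro y hy
    exact hrect x y hx (by simpa [Real.dist_eq] using hy)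
  have hint : ∀ x : ℝ, |x - x₀| ≤ ρ → ∀ p q : ℝ, |p - b₀| ≤ ρ → |q - b₀| ≤ ρ →
      IntervalIntegrable (fun y => V (x, y)) volume p q := by
    intro x hx p q hp hq
    apply ContinuousOn.intervalIntegrable
    apply (hslice x hx).mono
    rw [Real.closedBall_eq_Icc]
    apply uIcc_subset_Icc <;> constructor <;>
      [linarith [abs_le.1 hp]; linarith [abs_le.1 hp]; linarith [abs_le.1 hq]; linarith [abs_le.1 hq]]
  -- derivative of the frozen-integrand part
  have hS : IsOpen {y : ℝ | (x₀, y) ∈ U} :=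
    (hU.preimage (continuous_const.prodMk continuous_id))
  have hb₀S : b₀ ∈ {y : ℝ | (x₀, y) ∈ U} := hmem
  have hsliceU : ContinuousOn (fun y => V (x₀, y)) {y : ℝ | (x₀, y) ∈ U} :=
    hVc.comp ((continuous_const.prodMk continuous_id).continuousOn) (fun y hy => hy)
  have hΦ : HasDerivAt (fun t => ∫ y in b₀..t, V (x₀, y)) (V (x₀, b₀)) b₀ := by
    apply intervalIntegral.integral_hasDerivAt_right
      (hint x₀ (by simp [abs_nonneg, le_of_lt hρ]) b₀ b₀ (by simpa using le_of_lt hρ)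
        (by simpa using le_of_lt hρ))
      (ContinuousOn.stronglyMeasurableAtFilter hS hsliceU b₀ hb₀S)
      ((hsliceU.continuousAt (hS.mem_nhds hb₀S)))
  have hB1 : HasDerivAt (fun x => ∫ y in b₀..(b x), V (x₀, y)) (V (x₀, b₀) * b') x₀ :=
    hΦ.comp x₀ hb
  -- the correction term has derivative 0
  have hR : IsCompact ((Metric.closedBall x₀ ρ) ×ˢ (Metric.closedBall b₀ ρ)) :=
    (isCompact_closedBall _ _).prod (isCompact_closedBall _ _)
  have hRsub : (Metric.closedBall x₀ ρ) ×ˢ (Metric.closedBall b₀ ρ) ⊆ U := by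
    rintro ⟨x, y⟩ ⟨hx, hy⟩
    exact hrect x y (by simpa [Real.dist_eq] using hx) (by simpa [Real.dist_eq] using hy)
  have hD : HasDerivAt (fun x => ∫ y in b₀..(b x), (V (x, y) - V (x₀, y))) 0 x₀ := by
    rw [hasDerivAt_iff_isLittleO]
    rw [Asymptotics.isLittleO_iff]
    intro c hc
    obtain ⟨L, hL⟩ := hb.isBigO_sub.isBigOWith
    have hL' := hL.bound
    set L' : ℝ := max L 1 with hLdef
    have hL'pos : (0:ℝ) < L' := lt_of_lt_of_le one_pos (le_max_right _ _)
    have huc := Metric.uniformContinuousOn_iff.mp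
      (hR.uniformContinuousOn_of_continuous (hVc.mono hRsub)) (c / L') (div_pos hc hL'pos)
    obtain ⟨η, hη, hucb⟩ := huc
    have hev1 : ∀ᶠ x in nhds x₀, |x - x₀| < min η ρ :=
      Filter.eventually_of_mem (Metric.ball_mem_nhds x₀ (lt_min hη hρ))
        (fun x hx => by simpa [Real.dist_eq] using hx)
    have hev2 : ∀ᶠ x in nhds x₀, |b x - b₀| ≤ ρ := by
      have := hb.continuousAt (Metric.closedBall_mem_nhds b₀ hρ)
      filter_upwards [this] with x hx
      simpa [Real.dist_eq] using hx
    filter_upwards [hev1, hev2, hL'] with x hx1 hx2 hx3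
    have hxρ : |x - x₀| ≤ ρ := le_of_lt (lt_of_lt_of_le hx1 (min_le_right _ _))
    have hxη : |x - x₀| < η := lt_of_lt_of_le hx1 (min_le_left _ _)
    have hbound : ∀ y ∈ Set.uIoc b₀ (b x), ‖V (x, y) - V (x₀, y)‖ ≤ c / L' := by
      intro y hy
      have hyb : |y - b₀| ≤ ρ := by
        have := abs_sub_left_of_mem_uIcc (uIoc_subset_uIcc hy)
        exact le_trans this hx2
      have hxy : (x, y) ∈ (Metric.closedBall x₀ ρ) ×ˢ (Metric.closedBall b₀ ρ) :=
        ⟨by simpa [Real.dist_eq] using hxρ, by simpa [Real.dist_eq] using hyb⟩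
      have hx₀y : (x₀, y) ∈ (Metric.closedBall x₀ ρ) ×ˢ (Metric.closedBall b₀ ρ) :=
        ⟨by simp [le_of_lt hρ], by simpa [Real.dist_eq] using hyb⟩
      have hdxy : dist (x, y) (x₀, y) < η := by
        have heq : dist ((x, y) : ℝ × ℝ) (x₀, y) = dist x x₀ := by
          simp [Prod.dist_eq, dist_self, dist_nonneg]
        rw [heq, Real.dist_eq]; exact hxη
      have := hucb (x, y) hxy (x₀, y) hx₀y hdxy
      rw [Real.dist_eq] at this
      exact le_of_lt (by simpa using this)
    have hDle : ‖∫ y in b₀..(b x), (V (x, y) - V (x₀, y))‖ ≤ (c / L') * |b x - b₀| :=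
      intervalIntegral.norm_integral_le_of_norm_le_const hbound
    have hbx : ‖b x - b₀‖ ≤ L' * ‖x - x₀‖ := by
      refine le_trans hx3 ?_
      exact mul_le_mul_of_nonneg_right (le_max_left _ _) (norm_nonneg _)
    simp only [← hb₀, intervalIntegral.integral_same, smul_zero, sub_zero]
    calc ‖∫ y in b₀..(b x), (V (x, y) - V (x₀, y))‖
        ≤ (c / L') * |b x - b₀| := hDle
      _ ≤ (c / L') * (L' * ‖x - x₀‖) := by
          apply mul_le_mul_of_nonneg_left _ (le_of_lt (div_pos hc hL'pos))
          simpa [Real.norm_eq_abs] using hbx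
      _ = c * ‖x - x₀‖ := by field_simp
  -- combine
  have hev : (fun x => ∫ y in b₀..(b x), V (x, y)) =ᶠ[nhds x₀]
      (fun x => (∫ y in b₀..(b x), V (x₀, y)) + ∫ y in b₀..(b x), (V (x, y) - V (x₀, y))) := by
    have hev2 : ∀ᶠ x in nhds x₀, |b x - b₀| ≤ ρ := by
      have := hb.continuousAt (Metric.closedBall_mem_nhds b₀ hρ)
      filter_upwards [this] with x hx
      simpa [Real.dist_eq] using hx
    have hev1 : ∀ᶠ x in nhds x₀, |x - x₀| ≤ ρ :=
      Filter.eventually_of_mem (Metric.closedBall_mem_nhds x₀ hρ)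
        (fun x hx => by simpa [Real.dist_eq] using hx)
    filter_upwards [hev1, hev2] with x hx1 hx2
    rw [← intervalIntegral.integral_add
      (hint x₀ (by simp [le_of_lt hρ]) b₀ (b x) (by simp [le_of_lt hρ]) hx2)
      ((hint x hx1 b₀ (b x) (by simp [le_of_lt hρ]) hx2).sub
        (hint x₀ (by simp [le_of_lt hρ]) b₀ (b x) (by simp [le_of_lt hρ]) hx2))]
    congr 1
    ext y
    ring
  have := (hB1.add hD).congr_of_eventuallyEq hev
  simpa [mul_comm] using this

lemma aux_A {V V1 : ℝ × ℝ → ℝ} {U : Set (ℝ × ℝ)} (hU : IsOpen U)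
    (hVc : ContinuousOn V U) (hV1c : ContinuousOn V1 U)
    (hd : ∀ p ∈ U, HasDerivAt (fun x => V (x, p.2)) (V1 p) p.1)
    {a₀ b₀ x₀ : ℝ} (hseg : ∀ y ∈ Set.uIcc a₀ b₀, (x₀, y) ∈ U) :
    HasDerivAt (fun x => ∫ y in a₀..b₀, V (x, y)) (∫ y in a₀..b₀, V1 (x₀, y)) x₀ := by
  have hK : IsCompact (({x₀} : Set ℝ) ×ˢ Set.uIcc a₀ b₀) :=
    isCompact_singleton.prod isCompact_uIcc
  have hKU : ({x₀} : Set ℝ) ×ˢ Set.uIcc a₀ b₀ ⊆ U := by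
    rintro ⟨x, y⟩ ⟨hx, hy⟩
    rcases hx with rfl
    exact hseg y hy
  obtain ⟨δ, hδ, hthick⟩ := hK.exists_thickening_subset_open hU hKU
  have hRU : ∀ x y : ℝ, |x - x₀| < δ → y ∈ Set.uIcc a₀ b₀ → (x, y) ∈ U := by
    intro x y hx hy
    apply hthick
    rw [Metric.mem_thickening_iff]
    refine ⟨(x₀, y), ⟨rfl, hy⟩, ?_⟩
    have : dist ((x, y) : ℝ × ℝ) (x₀, y) = dist x x₀ := by
      simp [Prod.dist_eq, dist_self, dist_nonneg]
    rw [this, Real.dist_eq]; exact hx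
  have hRsub : Metric.closedBall x₀ (δ / 2) ×ˢ Set.uIcc a₀ b₀ ⊆ U := by
    rintro ⟨x, y⟩ ⟨hx, hy⟩
    apply hRU x y _ hy
    rw [Metric.mem_closedBall, Real.dist_eq] at hx
    linarith
  obtain ⟨M, hM⟩ := ((isCompact_closedBall x₀ (δ / 2)).prod isCompact_uIcc).exists_bound_of_continuousOn
    (hV1c.mono hRsub)
  have hslice : ∀ x : ℝ, x ∈ Metric.ball x₀ (δ / 2) →
      ContinuousOn (fun y => V (x, y)) (Set.uIcc a₀ b₀) := by
    intro x hx
    apply hVc.comp ((continuous_const.prodMk continuous_id).continuousOn)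
    intro y hy
    rw [Metric.mem_ball, Real.dist_eq] at hx
    exact hRU x y (by linarith [hδ]) hy
  have hslice1 : ContinuousOn (fun y => V1 (x₀, y)) (Set.uIcc a₀ b₀) := by
    apply hV1c.comp ((continuous_const.prodMk continuous_id).continuousOn)
    intro y hy
    exact hseg y hy
  have key := intervalIntegral.hasDerivAt_integral_of_dominated_loc_of_deriv_le
    (F := fun x y => V (x, y)) (F' := fun x y => V1 (x, y)) (x₀ := x₀)
    (a := a₀) (b := b₀) (bound := fun _ => M) (μ := volume) (Metric.ball_mem_nhds x₀ (half_pos hδ))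
    ?_ ?_ ?_ ?_ ?_ ?_
  · exact key.2
  · filter_upwards [Metric.ball_mem_nhds x₀ (half_pos hδ)] with x hx
    exact ((hslice x hx).mono Set.uIoc_subset_uIcc).aestronglyMeasurable measurableSet_uIoc
  · exact (hslice x₀ (Metric.mem_ball_self (half_pos hδ))).intervalIntegrable
  · exact ((hslice1.mono Set.uIoc_subset_uIcc).aestronglyMeasurable measurableSet_uIoc)
  · apply MeasureTheory.ae_of_all
    intro y hy x hx
    apply hM
    rw [Metric.mem_ball] at hx
    exact ⟨Metric.mem_closedBall.mpr (le_of_lt hx), Set.uIoc_subset_uIcc hy⟩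
  · exact intervalIntegrable_const
  · apply MeasureTheory.ae_of_all
    intro y hy x hx
    rw [Metric.mem_ball, Real.dist_eq] at hx
    exact hd (x, y) (hRU x y (by linarith [hδ]) (Set.uIoc_subset_uIcc hy))
noncomputable def Pf (u : ℝ → ℝ → ℝ) (p : ℝ × ℝ) : ℝ := u p.1 p.2
noncomputable def Vf (u : ℝ → ℝ → ℝ) (p : ℝ × ℝ) : ℝ := fderiv ℝ (Pf u) p (1, 0)
noncomputable def Wf (u : ℝ → ℝ → ℝ) (p : ℝ × ℝ) : ℝ := fderiv ℝ (Pf u) p (0, 1)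
noncomputable def V1f (u : ℝ → ℝ → ℝ) (p : ℝ × ℝ) : ℝ := fderiv ℝ (Vf u) p (1, 0)
noncomputable def W2f (u : ℝ → ℝ → ℝ) (p : ℝ × ℝ) : ℝ := fderiv ℝ (Wf u) p (0, 1)


/-- Flux identity (Lemma 4.1): for a harmonic function `u` on the periodic domain
between the graphs of `f` and `h`, the flux of `∇u` through the upper graph equals
the flux through the lower graph. -/
theorem stmt_19 (f h : ℝ → ℝ)
    (hf : ContDiff ℝ 1 f) (hh : ContDiff ℝ 1 h)
    (hfper : ∀ x : ℝ, f (x + 2 * Real.pi) = f x)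
    (hhper : ∀ x : ℝ, h (x + 2 * Real.pi) = h x)
    (hfh : ∀ x : ℝ, f x < h x)
    (Ω : Set (ℝ × ℝ)) (hΩ : Ω = {p : ℝ × ℝ | f p.1 < p.2 ∧ p.2 < h p.1})
    (u : ℝ → ℝ → ℝ) (U : Set (ℝ × ℝ)) (hU : IsOpen U) (hUΩ : closure Ω ⊆ U)
    (hu : ContDiffOn ℝ 2 (fun p : ℝ × ℝ => u p.1 p.2) U)
    (huper : ∀ x y : ℝ, u (x + 2 * Real.pi) y = u x y)
    (hharm : ∀ p ∈ Ω,
      deriv (fun x' => deriv (fun x'' => u x'' p.2) x') p.1 +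
        deriv (fun y' => deriv (fun y'' => u p.1 y'') y') p.2 = 0) :
    ∫ x in (0 : ℝ)..(2 * Real.pi),
        (deriv (fun y => u x y) (h x) - deriv h x * deriv (fun x' => u x' (h x)) x) =
      ∫ x in (0 : ℝ)..(2 * Real.pi),
        (deriv (fun y => u x y) (f x) - deriv f x * deriv (fun x' => u x' (f x)) x) := by
  have hP2 : ContDiffOn ℝ 2 (Pf u) U := hu
  have hUgraph : ∀ x y : ℝ, f x ≤ y → y ≤ h x → (x, y) ∈ U := by
    intro x y h1 h2
    apply hUΩ
    have hsub : ({x} : Set ℝ) ×ˢ Set.Ioo (f x) (h x) ⊆ Ω := by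
      rintro ⟨a, b⟩ ⟨ha, hb⟩
      rcases ha with rfl
      rw [hΩ]; exact ⟨hb.1, hb.2⟩
    apply closure_mono hsub
    rw [closure_prod_eq, closure_singleton, closure_Ioo (ne_of_lt (hfh x))]
    exact ⟨rfl, h1, h2⟩
  have hΩU : Ω ⊆ U := fun p hp => hUΩ (subset_closure hp)
  have hfd : ContDiffOn ℝ 1 (fderiv ℝ (Pf u)) U := hP2.fderiv_of_isOpen hU (by norm_num)
  have hVcd : ContDiffOn ℝ 1 (Vf u) U := by
    have := (ContinuousLinearMap.apply ℝ ℝ (((1:ℝ), (0:ℝ)))).contDiff.comp_contDiffOn hfd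
    exact this
  have hWcd : ContDiffOn ℝ 1 (Wf u) U := by
    have := (ContinuousLinearMap.apply ℝ ℝ (((0:ℝ), (1:ℝ)))).contDiff.comp_contDiffOn hfd
    exact this
  have hVcont : ContinuousOn (Vf u) U := hVcd.continuousOn
  have hWcont : ContinuousOn (Wf u) U := hWcd.continuousOn
  have hV1cont : ContinuousOn (V1f u) U := by
    have := (ContinuousLinearMap.apply ℝ ℝ (((1:ℝ), (0:ℝ)))).continuous.comp_continuousOn
      (hVcd.continuousOn_fderiv_of_isOpen hU le_rfl)
    exact this
  have hW2cont : ContinuousOn (W2f u) U := by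
    have := (ContinuousLinearMap.apply ℝ ℝ (((0:ℝ), (1:ℝ)))).continuous.comp_continuousOn
      (hWcd.continuousOn_fderiv_of_isOpen hU le_rfl)
    exact this
  have hPdiff : ∀ p ∈ U, DifferentiableAt ℝ (Pf u) p := fun p hp =>
    ((hP2.differentiableOn (by norm_num)) p hp).differentiableAt (hU.mem_nhds hp)
  have hVdiff : ∀ p ∈ U, DifferentiableAt ℝ (Vf u) p := fun p hp =>
    ((hVcd.differentiableOn one_ne_zero) p hp).differentiableAt (hU.mem_nhds hp)
  have hWdiff : ∀ p ∈ U, DifferentiableAt ℝ (Wf u) p := fun p hp =>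
    ((hWcd.differentiableOn one_ne_zero) p hp).differentiableAt (hU.mem_nhds hp)
  have hdV : ∀ p ∈ U, HasDerivAt (fun x => Vf u (x, p.2)) (V1f u p) p.1 := fun p hp =>
    slice1 (hVdiff p hp)
  have hdW : ∀ p ∈ U, HasDerivAt (fun y => Wf u (p.1, y)) (W2f u p) p.2 := fun p hp =>
    slice2 (hWdiff p hp)
  have hdPx : ∀ p ∈ U, HasDerivAt (fun x => u x p.2) (Vf u p) p.1 := fun p hp =>
    slice1 (hPdiff p hp)
  have hdPy : ∀ p ∈ U, HasDerivAt (fun y => u p.1 y) (Wf u p) p.2 := fun p hp =>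
    slice2 (hPdiff p hp)
  -- harmonicity in terms of V1f, W2f
  have hVW : ∀ p ∈ Ω, V1f u p = -(W2f u p) := by
    intro p hp
    have hpU : p ∈ U := hΩU hp
    have e1 : (fun x' => deriv (fun x'' => u x'' p.2) x') =ᶠ[nhds p.1]
        (fun x' => Vf u (x', p.2)) := by
      have hS : IsOpen {x' : ℝ | (x', p.2) ∈ U} :=
        hU.preimage (continuous_id.prodMk continuous_const)
      have hmem : p.1 ∈ {x' : ℝ | (x', p.2) ∈ U} := by simpa using hpU
      filter_upwards [hS.mem_nhds hmem] with x' hx'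
      exact (hdPx (x', p.2) hx').deriv
    have e2 : (fun y' => deriv (fun y'' => u p.1 y'') y') =ᶠ[nhds p.2]
        (fun y' => Wf u (p.1, y')) := by
      have hS : IsOpen {y' : ℝ | (p.1, y') ∈ U} :=
        hU.preimage (continuous_const.prodMk continuous_id)
      have hmem : p.2 ∈ {y' : ℝ | (p.1, y') ∈ U} := by simpa using hpU
      filter_upwards [hS.mem_nhds hmem] with y' hy'
      exact (hdPy (p.1, y') hy').deriv
    have t1 : deriv (fun x' => deriv (fun x'' => u x'' p.2) x') p.1 = V1f u p := by
      rw [e1.deriv_eq]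
      exact (hdV p hpU).deriv
    have t2 : deriv (fun y' => deriv (fun y'' => u p.1 y'') y') p.2 = W2f u p := by
      rw [e2.deriv_eq]
      exact (hdW p hpU).deriv
    have := hharm p hp
    rw [t1, t2] at this
    linarith
  -- the key derivative computation
  have hG : ∀ x₀ : ℝ, HasDerivAt (fun x => ∫ y in (f x)..(h x), Vf u (x, y))
      ((Wf u (x₀, f x₀) - deriv f x₀ * Vf u (x₀, f x₀)) -
        (Wf u (x₀, h x₀) - deriv h x₀ * Vf u (x₀, h x₀))) x₀ := by
    intro x₀
    set a₀ := f x₀ with ha₀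
    set b₀ := h x₀ with hb₀
    have hab : a₀ ≤ b₀ := le_of_lt (hfh x₀)
    -- a uniform rectangle inside U around the segment
    have hK : IsCompact (({x₀} : Set ℝ) ×ˢ Set.Icc a₀ b₀) :=
      isCompact_singleton.prod isCompact_Icc
    have hKU : ({x₀} : Set ℝ) ×ˢ Set.Icc a₀ b₀ ⊆ U := by
      rintro ⟨x, y⟩ ⟨hx, hy⟩
      rw [Set.mem_singleton_iff] at hx
      subst hx
      exact hUgraph x y hy.1 hy.2
    obtain ⟨δ, hδ, hthick⟩ := hK.exists_thickening_subset_open hU hKU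
    set r := δ / 2 with hrdef
    have hr : 0 < r := half_pos hδ
    have hrect : ∀ x y : ℝ, |x - x₀| ≤ r → a₀ - r ≤ y → y ≤ b₀ + r → (x, y) ∈ U := by
      intro x y h1 h2 h3
      apply hthick
      rw [Metric.mem_thickening_iff]
      refine ⟨(x₀, max a₀ (min y b₀)), ⟨rfl, le_max_left _ _,
        max_le hab (min_le_right _ _)⟩, ?_⟩
      have hyd : |y - max a₀ (min y b₀)| ≤ r := by
        rcases le_total y a₀ with hc | hc
        · rw [min_eq_left (le_trans hc hab), max_eq_left hc]
          rw [abs_le]; constructor <;> linarith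
        · rcases le_total y b₀ with hc2 | hc2
          · rw [min_eq_left hc2, max_eq_right hc]
            simp [hr.le]
          · rw [min_eq_right hc2, max_eq_right hab]
            rw [abs_le]; constructor <;> linarith
      calc dist ((x, y) : ℝ × ℝ) (x₀, max a₀ (min y b₀))
          = max (dist x x₀) (dist y (max a₀ (min y b₀))) := Prod.dist_eq
        _ ≤ r := by rw [Real.dist_eq, Real.dist_eq]; exact max_le h1 hyd
        _ < δ := by rw [hrdef]; linarith
    -- eventual decomposition
    have hevhyp : ∀ᶠ x in nhds x₀, |x - x₀| ≤ r ∧ |f x - a₀| ≤ r ∧ |h x - b₀| ≤ r := by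
      have e1 : ∀ᶠ x in nhds x₀, |x - x₀| ≤ r :=
        Filter.eventually_of_mem (Metric.closedBall_mem_nhds x₀ hr)
          (fun x hx => by simpa [Real.dist_eq] using hx)
      have e2 : ∀ᶠ x in nhds x₀, |f x - a₀| ≤ r := by
        have := (hf.continuous.continuousAt (x := x₀)) (Metric.closedBall_mem_nhds a₀ hr)
        filter_upwards [this] with x hx
        simpa [Real.dist_eq] using hx
      have e3 : ∀ᶠ x in nhds x₀, |h x - b₀| ≤ r := by
        have := (hh.continuous.continuousAt (x := x₀)) (Metric.closedBall_mem_nhds b₀ hr)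
        filter_upwards [this] with x hx
        simpa [Real.dist_eq] using hx
      exact e1.and (e2.and e3)
    have hevEq : (fun x => ∫ y in (f x)..(h x), Vf u (x, y)) =ᶠ[nhds x₀]
        (fun x => ((∫ y in a₀..b₀, Vf u (x, y)) + ∫ y in b₀..(h x), Vf u (x, y)) -
          ∫ y in a₀..(f x), Vf u (x, y)) := by
      filter_upwards [hevhyp] with x hx
      obtain ⟨hx1, hx2, hx3⟩ := hx
      have hi : ∀ p q : ℝ, p ∈ Set.Icc (a₀ - r) (b₀ + r) → q ∈ Set.Icc (a₀ - r) (b₀ + r) →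
          IntervalIntegrable (fun y => Vf u (x, y)) MeasureTheory.volume p q := by
        intro p q hp hq
        apply ContinuousOn.intervalIntegrable
        apply ContinuousOn.mono (s := Set.Icc (a₀ - r) (b₀ + r))
        · apply hVcont.comp ((continuous_const.prodMk continuous_id).continuousOn)
          intro y hy
          exact hrect x y hx1 hy.1 hy.2
        · exact Set.uIcc_subset_Icc hp hq
      have hmema : a₀ ∈ Set.Icc (a₀ - r) (b₀ + r) := ⟨by linarith, by linarith⟩
      have hmemb : b₀ ∈ Set.Icc (a₀ - r) (b₀ + r) := ⟨by linarith, by linarith⟩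
      have hmemf : f x ∈ Set.Icc (a₀ - r) (b₀ + r) := by
        rw [abs_le] at hx2; constructor <;> linarith
      have hmemh : h x ∈ Set.Icc (a₀ - r) (b₀ + r) := by
        rw [abs_le] at hx3; constructor <;> linarith
      have q1 := intervalIntegral.integral_add_adjacent_intervals
        (hi a₀ b₀ hmema hmemb) (hi b₀ (h x) hmemb hmemh)
      have q2 := intervalIntegral.integral_add_adjacent_intervals
        (hi a₀ (f x) hmema hmemf) (hi (f x) (h x) hmemf hmemh)
      rw [q1, ← q2]; ring
    have hA : HasDerivAt (fun x => ∫ y in a₀..b₀, Vf u (x, y))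
        (∫ y in a₀..b₀, V1f u (x₀, y)) x₀ := by
      apply aux_A hU hVcont hV1cont hdV
      intro y hy
      rw [Set.uIcc_of_le hab] at hy
      exact hUgraph x₀ y hy.1 hy.2
    have hB : HasDerivAt (fun x => ∫ y in b₀..(h x), Vf u (x, y))
        (deriv h x₀ * Vf u (x₀, b₀)) x₀ :=
      aux_B hU hVcont ((hh.differentiable one_ne_zero).differentiableAt.hasDerivAt)
        (hUgraph x₀ b₀ hab le_rfl)
    have hC : HasDerivAt (fun x => ∫ y in a₀..(f x), Vf u (x, y))
        (deriv f x₀ * Vf u (x₀, a₀)) x₀ :=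
      aux_B hU hVcont ((hf.differentiable one_ne_zero).differentiableAt.hasDerivAt)
        (hUgraph x₀ a₀ le_rfl hab)
    have hG' := ((hA.add hB).sub hC).congr_of_eventuallyEq hevEq
    -- rewrite the parametric integral using harmonicity and FTC
    have hFTC : ∫ y in a₀..b₀, W2f u (x₀, y) = Wf u (x₀, b₀) - Wf u (x₀, a₀) := by
      apply intervalIntegral.integral_eq_sub_of_hasDerivAt (f := fun y => Wf u (x₀, y))
      · intro y hy
        rw [Set.uIcc_of_le hab] at hy
        exact hdW (x₀, y) (hUgraph x₀ y hy.1 hy.2)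
      · apply ContinuousOn.intervalIntegrable
        apply hW2cont.comp ((continuous_const.prodMk continuous_id).continuousOn)
        intro y hy
        rw [Set.uIcc_of_le hab] at hy
        exact hUgraph x₀ y hy.1 hy.2
    have hcong : ∫ y in a₀..b₀, V1f u (x₀, y) = ∫ y in a₀..b₀, -(W2f u (x₀, y)) := by
      apply intervalIntegral.integral_congr_ae
      have hae : ∀ᵐ y : ℝ ∂MeasureTheory.volume, y ≠ b₀ := by
        rw [MeasureTheory.ae_iff]
        simpa [ne_eq, not_not, Set.setOf_eq_eq_singleton] using
          (MeasureTheory.measure_singleton (μ := MeasureTheory.volume) b₀)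
      filter_upwards [hae] with y hne hy
      rw [Set.uIoc_of_le hab] at hy
      apply hVW
      rw [hΩ]
      exact ⟨hy.1, lt_of_le_of_ne hy.2 hne⟩
    have : HasDerivAt (fun x => ∫ y in (f x)..(h x), Vf u (x, y))
        ((∫ y in a₀..b₀, V1f u (x₀, y)) + deriv h x₀ * Vf u (x₀, b₀) -
          deriv f x₀ * Vf u (x₀, a₀)) x₀ := hG'
    convert this using 1
    rw [hcong, intervalIntegral.integral_neg, hFTC]
    ring
  -- periodicity
  have hf2π : f (2 * Real.pi) = f 0 := by simpa using hfper 0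
  have hh2π : h (2 * Real.pi) = h 0 := by simpa using hhper 0
  have hVper : ∀ y : ℝ, f 0 ≤ y → y ≤ h 0 → Vf u (2 * Real.pi, y) = Vf u (0, y) := by
    intro y h1 h2
    have hp1 : ((2 * Real.pi : ℝ), y) ∈ U :=
      hUgraph _ y (by rw [hf2π]; exact h1) (by rw [hh2π]; exact h2)
    have hτ : HasFDerivAt (fun p : ℝ × ℝ => p + ((2 * Real.pi : ℝ), (0 : ℝ)))
        (ContinuousLinearMap.id ℝ (ℝ × ℝ)) ((0 : ℝ), y) := (hasFDerivAt_id _).add_const _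
    have h1' : HasFDerivAt (Pf u) (fderiv ℝ (Pf u) ((2 * Real.pi : ℝ), y))
        (((0 : ℝ), y) + ((2 * Real.pi : ℝ), (0 : ℝ))) := by
      have heq : (((0 : ℝ), y) + ((2 * Real.pi : ℝ), (0 : ℝ))) = ((2 * Real.pi : ℝ), y) := by
        simp [Prod.ext_iff]
      rw [heq]
      exact (hPdiff _ hp1).hasFDerivAt
    have hcomp := h1'.comp ((0 : ℝ), y) hτ
    have hPeq : (Pf u ∘ fun p : ℝ × ℝ => p + ((2 * Real.pi : ℝ), (0 : ℝ))) = Pf u := by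
      funext p
      simp only [Function.comp, Pf, Prod.fst_add, Prod.snd_add]
      simpa using huper p.1 p.2
    rw [hPeq] at hcomp
    have hfde := hcomp.fderiv
    simp only [ContinuousLinearMap.comp_id] at hfde
    unfold Vf
    rw [hfde]
  -- continuity of the two fluxes
  have hgraphh : ∀ x : ℝ, (x, h x) ∈ U := fun x => hUgraph x (h x) (le_of_lt (hfh x)) le_rfl
  have hgraphf : ∀ x : ℝ, (x, f x) ∈ U := fun x => hUgraph x (f x) le_rfl (le_of_lt (hfh x))
  have hconth : Continuous fun x : ℝ => ((x, h x) : ℝ × ℝ) := continuous_id.prodMk hh.continuous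
  have hcontf : Continuous fun x : ℝ => ((x, f x) : ℝ × ℝ) := continuous_id.prodMk hf.continuous
  have hTopc : Continuous (fun x => Wf u (x, h x) - deriv h x * Vf u (x, h x)) := by
    apply Continuous.sub
    · exact continuous_iff_continuousAt.2 fun x =>
        ContinuousAt.comp (f := fun x : ℝ => ((x, h x) : ℝ × ℝ)) (hWcont.continuousAt (hU.mem_nhds (hgraphh x))) hconth.continuousAt
    · exact (hh.continuous_deriv le_rfl).mul (continuous_iff_continuousAt.2 fun x =>
        ContinuousAt.comp (f := fun x : ℝ => ((x, h x) : ℝ × ℝ)) (hVcont.continuousAt (hU.mem_nhds (hgraphh x))) hconth.continuousAt)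
  have hBotc : Continuous (fun x => Wf u (x, f x) - deriv f x * Vf u (x, f x)) := by
    apply Continuous.sub
    · exact continuous_iff_continuousAt.2 fun x =>
        ContinuousAt.comp (f := fun x : ℝ => ((x, f x) : ℝ × ℝ)) (hWcont.continuousAt (hU.mem_nhds (hgraphf x))) hcontf.continuousAt
    · exact (hf.continuous_deriv le_rfl).mul (continuous_iff_continuousAt.2 fun x =>
        ContinuousAt.comp (f := fun x : ℝ => ((x, f x) : ℝ × ℝ)) (hVcont.continuousAt (hU.mem_nhds (hgraphf x))) hcontf.continuousAt)
  have hIntTop : IntervalIntegrable (fun x => Wf u (x, h x) - deriv h x * Vf u (x, h x))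
      MeasureTheory.volume (0 : ℝ) (2 * Real.pi) := hTopc.intervalIntegrable _ _
  have hIntBot : IntervalIntegrable (fun x => Wf u (x, f x) - deriv f x * Vf u (x, f x))
      MeasureTheory.volume (0 : ℝ) (2 * Real.pi) := hBotc.intervalIntegrable _ _
  -- FTC over the period
  have key : ∫ x in (0 : ℝ)..(2 * Real.pi),
      ((Wf u (x, f x) - deriv f x * Vf u (x, f x)) -
        (Wf u (x, h x) - deriv h x * Vf u (x, h x))) =
      (∫ y in (f (2 * Real.pi))..(h (2 * Real.pi)), Vf u (2 * Real.pi, y)) -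
        ∫ y in (f 0)..(h 0), Vf u (0, y) :=
    intervalIntegral.integral_eq_sub_of_hasDerivAt (fun x _ => hG x)
      (hIntBot.sub hIntTop)
  have hzero : (∫ y in (f (2 * Real.pi))..(h (2 * Real.pi)), Vf u (2 * Real.pi, y)) -
      ∫ y in (f 0)..(h 0), Vf u (0, y) = 0 := by
    rw [hf2π, hh2π, sub_eq_zero]
    apply intervalIntegral.integral_congr
    intro y hy
    rw [Set.uIcc_of_le (le_of_lt (hfh 0))] at hy
    exact hVper y hy.1 hy.2
  have hsplit := key.trans hzero
  rw [intervalIntegral.integral_sub hIntBot hIntTop] at hsplit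
  -- rewrite the statement's integrands
  have eTop : ∫ x in (0 : ℝ)..(2 * Real.pi),
      (deriv (fun y => u x y) (h x) - deriv h x * deriv (fun x' => u x' (h x)) x) =
      ∫ x in (0 : ℝ)..(2 * Real.pi), (Wf u (x, h x) - deriv h x * Vf u (x, h x)) := by
    apply intervalIntegral.integral_congr
    intro x _
    have d1 : deriv (fun y => u x y) (h x) = Wf u (x, h x) :=
      (hdPy (x, h x) (hgraphh x)).deriv
    have d2 : deriv (fun x' => u x' (h x)) x = Vf u (x, h x) :=
      (hdPx (x, h x) (hgraphh x)).deriv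
    simp only [d1, d2]
  have eBot : ∫ x in (0 : ℝ)..(2 * Real.pi),
      (deriv (fun y => u x y) (f x) - deriv f x * deriv (fun x' => u x' (f x)) x) =
      ∫ x in (0 : ℝ)..(2 * Real.pi), (Wf u (x, f x) - deriv f x * Vf u (x, f x)) := by
    apply intervalIntegral.integral_congr
    intro x _
    have d1 : deriv (fun y => u x y) (f x) = Wf u (x, f x) :=
      (hdPy (x, f x) (hgraphf x)).deriv
    have d2 : deriv (fun x' => u x' (f x)) x = Vf u (x, f x) :=
      (hdPx (x, f x) (hgraphf x)).deriv
    simp only [d1, d2]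
  rw [eTop, eBot]
  linarith
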